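/- In a finite semimodular lattice, if two distinct covering squares (cover-preserving sublattices isomorphic to C2 × C2) have the same bottom element, then the lattice is not slim. Equivalently: in a slim semimodular lattice, no two distinct covering squares share the same bottom element. -/
import Mathlib


/-- A covering square `{o, a, b, i}` of a lattice. -/
def IsCoveringSquare {L : Type*} [Lattice L] (o a b i : L) : Prop :=
  o ⋖ a ∧ o ⋖ b ∧ a ⋖ i ∧ b ⋖ i ∧ a ≠ b ∧ a ⊓ b = o ∧ a ⊔ b = i

private lemma exists_supIrred_le_not_le {L : Type*} [Lattice L] [Fintype L]
    (o : L) : ∀ x : L, ¬ x ≤ o → ∃ p : L, SupIrred p ∧ p ≤ x ∧ ¬ p ≤ o := by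
  have : WellFoundedLT L := Finite.to_wellFoundedLT
  intro x
  induction x using WellFoundedLT.induction with
  | ind x ih =>
    intro hx
    have hmin : ¬ IsMin x := by
      intro h
      exact hx (le_trans (h inf_le_left) inf_le_right)
    by_cases hs : SupIrred x
    · exact ⟨x, hs, le_rfl, hx⟩
    · simp only [SupIrred, not_and, not_forall] at hs
      obtain ⟨y, z, hyz, hne⟩ := hs hmin
      push_neg at hne
      obtain ⟨hy, hz⟩ := hne
      have hylt : y < x := lt_of_le_of_ne (hyz ▸ le_sup_left) hy
      have hzlt : z < x := lt_of_le_of_ne (hyz ▸ le_sup_right) hz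
      by_cases hyo : y ≤ o
      · have hzo : ¬ z ≤ o := by
          intro hzo
          exact hx (hyz ▸ sup_le hyo hzo)
        obtain ⟨p, hp, hpz, hpo⟩ := ih z hzlt hzo
        exact ⟨p, hp, hpz.trans hzlt.le, hpo⟩
      · obtain ⟨p, hp, hpy, hpo⟩ := ih y hylt hyo
        exact ⟨p, hp, hpy.trans hylt.le, hpo⟩

private lemma inf_of_covers {L : Type*} [Lattice L] {o x y : L}
    (hx : o ⋖ x) (hy : o ⋖ y) (hxy : x ≠ y) : x ⊓ y = o := by
  have h1 : o ≤ x ⊓ y := le_inf hx.le hy.le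
  rcases h1.lt_or_eq with h | h
  · exfalso
    have hlt : x ⊓ y ≤ x := inf_le_left
    rcases hlt.lt_or_eq with h2 | h2
    · exact hx.2 h h2
    · have : x < y := lt_of_le_of_ne (h2 ▸ inf_le_right) hxy
      exact hy.2 (h2 ▸ h) this
  · exact h.symm

/-- In a finite semimodular lattice, if two distinct covering squares have the
same bottom element, then the lattice is not slim. -/
theorem stmt_5 {L : Type*} [Lattice L] [Fintype L]
    (semimod : ∀ a b : L, a ⊓ b ⋖ a → b ⋖ a ⊔ b)
    (o a b i a' b' i' : L)
    (h₁ : IsCoveringSquare o a b i) (h₂ : IsCoveringSquare o a' b' i')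
    (hdiff : ({o, a, b, i} : Set L) ≠ {o, a', b', i'}) :
    ∃ p q r : L, SupIrred p ∧ SupIrred q ∧ SupIrred r ∧
      ¬ p ≤ q ∧ ¬ q ≤ p ∧ ¬ p ≤ r ∧ ¬ r ≤ p ∧ ¬ q ≤ r ∧ ¬ r ≤ q := by
  obtain ⟨hoa, hob, hai, hbi, hab, hinf, hsup⟩ := h₁
  obtain ⟨hoa', hob', hai', hbi', hab', hinf', hsup'⟩ := h₂
  -- find three pairwise distinct covers of o
  have key : ∃ x y z : L, o ⋖ x ∧ o ⋖ y ∧ o ⋖ z ∧ x ≠ y ∧ x ≠ z ∧ y ≠ z := by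
    by_cases ha' : a' = a ∨ a' = b
    · by_cases hb' : b' = a ∨ b' = b
      · exfalso
        apply hdiff
        rcases ha' with h | h <;> rcases hb' with h' | h'
        · exact absurd (h.trans h'.symm) hab'
        · have hii : i' = i := by rw [← hsup', h, h', hsup]
          rw [hii, h, h']
        · have hii : i' = i := by rw [← hsup', h, h', sup_comm, hsup]
          rw [hii, h, h']
          exact congrArg (insert o) (Set.insert_comm a b _)
        · exact absurd (h.trans h'.symm) hab'
      · push_neg at hb'
        exact ⟨a, b, b', hoa, hob, hob', hab, Ne.symm hb'.1, Ne.symm hb'.2⟩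
    · push_neg at ha'
      exact ⟨a, b, a', hoa, hob, hoa', hab, Ne.symm ha'.1, Ne.symm ha'.2⟩
  obtain ⟨x, y, z, hx, hy, hz, hxy, hxz, hyz⟩ := key
  have nxo : ¬ x ≤ o := fun h => absurd (h.trans_lt hx.lt) (lt_irrefl x)
  have nyo : ¬ y ≤ o := fun h => absurd (h.trans_lt hy.lt) (lt_irrefl y)
  have nzo : ¬ z ≤ o := fun h => absurd (h.trans_lt hz.lt) (lt_irrefl z)
  obtain ⟨p, hp, hpx, hpo⟩ := exists_supIrred_le_not_le o x nxo
  obtain ⟨q, hq, hqy, hqo⟩ := exists_supIrred_le_not_le o y nyo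
  obtain ⟨r, hr, hrz, hro⟩ := exists_supIrred_le_not_le o z nzo
  have anti : ∀ {u v s t : L}, o ⋖ s → o ⋖ t → s ≠ t → u ≤ s → v ≤ t →
      ¬ u ≤ o → u ≤ v → False := by
    intro u v s t hs ht hst hus hvt huo huv
    exact huo (le_trans (le_inf hus (huv.trans hvt)) (inf_of_covers hs ht hst ▸ le_rfl))
  exact ⟨p, q, r, hp, hq, hr,
    fun h => anti hx hy hxy hpx hqy hpo h,
    fun h => anti hy hx hxy.symm hqy hpx hqo h,
    fun h => anti hx hz hxz hpx hrz hpo h,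
    fun h => anti hz hx hxz.symm hrz hpx hro h,
    fun h => anti hy hz hyz hqy hrz hqo h,
    fun h => anti hz hy hyz.symm hrz hqy hro h⟩
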